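/- Let R be a non-integer real number with 0 < R < 1, let q > 0 and x > 0 be real. Then, along the coupled sequence h_N = q x / N, the truncated Grünwald–Letnikov sum of order R of f(x) = x converges: lim_{N→∞} (q x/N)^{-R} ∑_{k=0}^{N} (-1)^k C(R,k) (x - k·q x/N) = (sin(πR)/π) · Γ(R) · q^{-R} · x^{1-R} · (1 - Rq/(R-1)). -/

import Mathlib

open Finset Filter Real

/-- Generalized binomial coefficient C(R,k) = R(R-1)⋯(R-k+1)/k! for real R and natural k. -/
noncomputable def genBinom (R : ℝ) (k : ℕ) : ℝ :=
  (∏ i ∈ Finset.range k, (R - i)) / (Nat.factorial k)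

lemma genBinom_succ_prod (R : ℝ) (k : ℕ) :
    ∏ i ∈ Finset.range (k+1), (R - i) = R * ∏ i ∈ Finset.range k, (R - 1 - i) := by
  rw [Finset.prod_range_succ']
  simp only [Nat.cast_zero, sub_zero, Nat.cast_add, Nat.cast_one]
  rw [mul_comm]
  congr 1
  exact Finset.prod_congr rfl (fun i _ => by ring)

lemma genBinom_pascal (R : ℝ) (k : ℕ) :
    genBinom R (k+1) = genBinom (R-1) (k+1) + genBinom (R-1) k := by
  unfold genBinom
  rw [genBinom_succ_prod, Finset.prod_range_succ]
  have hfac : (Nat.factorial (k+1) : ℝ) = ((k:ℝ)+1) * Nat.factorial k := by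
    push_cast [Nat.factorial_succ]; ring
  have h1 : (Nat.factorial k : ℝ) ≠ 0 := Nat.cast_ne_zero.mpr k.factorial_ne_zero
  have h2 : ((k:ℝ)+1) ≠ 0 := by positivity
  rw [hfac]
  field_simp
  ring

lemma sum_alt (R : ℝ) (N : ℕ) :
    ∑ k ∈ Finset.range (N+1), (-1:ℝ)^k * genBinom R k = (-1)^N * genBinom (R-1) N := by
  induction N with
  | zero => simp [genBinom]
  | succ N ih =>
    rw [Finset.sum_range_succ, ih, genBinom_pascal, pow_succ]
    ring

lemma genBinom_mul (R : ℝ) (k : ℕ) :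
    ((k:ℝ)+1) * genBinom R (k+1) = R * genBinom (R-1) k := by
  unfold genBinom
  rw [genBinom_succ_prod]
  have hfac : (Nat.factorial (k+1) : ℝ) = ((k:ℝ)+1) * Nat.factorial k := by
    push_cast [Nat.factorial_succ]; ring
  have h1 : (Nat.factorial k : ℝ) ≠ 0 := Nat.cast_ne_zero.mpr k.factorial_ne_zero
  have h2 : ((k:ℝ)+1) ≠ 0 := by positivity
  rw [hfac]
  field_simp

lemma sum_main (R h x : ℝ) (N : ℕ) :
    ∑ k ∈ Finset.range (N+2), (-1:ℝ)^k * genBinom R k * (x - k*h)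
    = x * ((-1)^(N+1) * genBinom (R-1) (N+1)) + h * R * ((-1)^N * genBinom (R-2) N) := by
  have split : ∀ k : ℕ, (-1:ℝ)^k * genBinom R k * (x - k*h)
      = x * ((-1:ℝ)^k * genBinom R k) - h * ((-1:ℝ)^k * (k * genBinom R k)) := by
    intro k; ring
  rw [Finset.sum_congr rfl (fun k _ => split k), Finset.sum_sub_distrib,
    ← Finset.mul_sum, ← Finset.mul_sum]
  rw [sum_alt R (N+1)]
  have h2 : ∑ k ∈ Finset.range (N+2), (-1:ℝ)^k * (k * genBinom R k)
      = - (R * ((-1)^N * genBinom (R-2) N)) := by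
    rw [Finset.sum_range_succ']
    simp only [Nat.cast_zero, zero_mul, mul_zero, add_zero, Nat.cast_add, Nat.cast_one]
    have key : ∀ i : ℕ, (-1:ℝ)^(i+1) * (((i:ℝ)+1) * genBinom R (i+1))
        = -((-1:ℝ)^i * (R * genBinom (R-1) i)) := by
      intro i; rw [genBinom_mul, pow_succ]; ring
    rw [Finset.sum_congr rfl (fun i _ => key i), Finset.sum_neg_distrib]
    have hsum := sum_alt (R-1) N
    have hr : R - 1 - 1 = R - 2 := by ring
    have factor : ∀ i : ℕ, (-1:ℝ)^i * (R * genBinom (R-1) i)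
        = R * ((-1:ℝ)^i * genBinom (R-1) i) := fun i => by ring
    rw [Finset.sum_congr rfl (fun i _ => factor i), ← Finset.mul_sum, hsum, hr]
  rw [h2]; ring

lemma alt_genBinom (α : ℝ) (N : ℕ) :
    (-1:ℝ)^N * genBinom α N = (∏ i ∈ Finset.range N, ((i:ℝ) - α)) / Nat.factorial N := by
  unfold genBinom
  rw [← mul_div_assoc]
  congr 1
  have : ∀ i ∈ Finset.range N, ((i:ℝ) - α) = (-1) * (α - i) := fun i _ => by ring
  rw [Finset.prod_congr rfl this, Finset.prod_mul_distrib, Finset.prod_const,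
    Finset.card_range]

lemma tendsto_G (s : ℝ) (hs : 0 < s) :
    Filter.Tendsto (fun N : ℕ => (N:ℝ)^(1-s) * ((∏ i ∈ Finset.range N, (s + i)) / Nat.factorial N))
      Filter.atTop (nhds (1 / Real.Gamma s)) := by
  have hG : Real.Gamma s ≠ 0 := (Real.Gamma_pos_of_pos hs).ne'
  have key : ∀ N : ℕ, 1 ≤ N → (N:ℝ)^(1-s) * ((∏ i ∈ Finset.range N, (s+i)) / Nat.factorial N)
      = ((N:ℝ) / (s + N)) * (1 / Real.GammaSeq s N) := by
    intro N hN
    have hN0 : (0:ℝ) < N := by exact_mod_cast hN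
    have hpow : (N:ℝ)^(1-s) * (N:ℝ)^s = (N:ℝ) := by
      rw [← Real.rpow_add hN0]; norm_num
    have hprod : (0:ℝ) < ∏ i ∈ Finset.range N, (s + i) := by
      apply Finset.prod_pos; intro i _; positivity
    have hfac : (0:ℝ) < (Nat.factorial N : ℝ) := by positivity
    have hsN : (0:ℝ) < s + N := by positivity
    have hps : (0:ℝ) < (N:ℝ)^s := Real.rpow_pos_of_pos hN0 s
    rw [Real.GammaSeq, Finset.prod_range_succ]
    field_simp
    linear_combination hpow
  have h1 : Filter.Tendsto (fun N : ℕ => (N:ℝ) / (s + N)) Filter.atTop (nhds 1) := by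
    have ha : Filter.Tendsto (fun N : ℕ => s + (N:ℝ)) Filter.atTop Filter.atTop :=
      tendsto_atTop_add_const_left _ _ tendsto_natCast_atTop_atTop
    have h0 : Filter.Tendsto (fun N : ℕ => s / (s + (N:ℝ))) Filter.atTop (nhds 0) :=
      tendsto_const_nhds.div_atTop ha
    have := (tendsto_const_nhds (x := (1:ℝ)) (f := Filter.atTop (α := ℕ))).sub h0
    rw [sub_zero] at this
    apply this.congr'
    filter_upwards [Filter.eventually_gt_atTop 0] with N hN
    have hN0 : (0:ℝ) < N := by exact_mod_cast hN
    field_simp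
    ring
  have h2 : Filter.Tendsto (fun N : ℕ => 1 / Real.GammaSeq s N) Filter.atTop
      (nhds (1 / Real.Gamma s)) := by
    simpa using (Real.GammaSeq_tendsto_Gamma s).inv₀ hG
  have := h1.mul h2
  rw [one_mul] at this
  apply this.congr'
  filter_upwards [Filter.eventually_ge_atTop 1] with N hN
  exact (key N hN).symm

/-- For non-integer 0 < R < 1 and q, x > 0, the truncated Grünwald–Letnikov sum of
    order R of f(x) = x along h_N = qx/N converges to
    (sin(πR)/π) Γ(R) q^{-R} x^{1-R} (1 - Rq/(R-1)). -/
theorem coupled_GL_linear_limit (R : ℝ) (hR : ∀ n : ℤ, R ≠ (n : ℝ))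
    (hR0 : 0 < R) (hR1 : R < 1) (q x : ℝ) (hq : 0 < q) (hx : 0 < x) :
    Filter.Tendsto
      (fun N : ℕ =>
        (q * x / N) ^ (-R) *
          ∑ k ∈ Finset.range (N + 1),
            (-1 : ℝ) ^ k * genBinom R k * (x - k * (q * x / N)))
      Filter.atTop
      (nhds (Real.sin (Real.pi * R) / Real.pi * Real.Gamma R * q ^ (-R) * x ^ (1 - R)
        * (1 - R * q / (R - 1)))) := by
  have hqx : (0:ℝ) < q * x := by positivity
  have h1R : (0:ℝ) < 1 - R := by linarith
  have h2R : (0:ℝ) < 2 - R := by linarith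
  have hG1 : (0:ℝ) < Real.Gamma (1-R) := Real.Gamma_pos_of_pos h1R
  have hG2 : (0:ℝ) < Real.Gamma (2-R) := Real.Gamma_pos_of_pos h2R
  -- Part A limit
  have tA : Filter.Tendsto (fun M : ℕ => (M:ℝ)^R * ((-1:ℝ)^M * genBinom (R-1) M))
      Filter.atTop (nhds (1 / Real.Gamma (1-R))) := by
    apply (tendsto_G (1-R) h1R).congr
    intro M
    rw [alt_genBinom]
    have h1 : 1-(1-R) = R := by ring
    have h2 : ∀ i ∈ Finset.range M, (1-R)+(i:ℝ) = (i:ℝ)-(R-1) := fun i _ => by ring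
    rw [h1, Finset.prod_congr rfl h2]
  have tB0 : Filter.Tendsto (fun M : ℕ => (M:ℝ)^(R-1) * ((-1:ℝ)^M * genBinom (R-2) M))
      Filter.atTop (nhds (1 / Real.Gamma (2-R))) := by
    apply (tendsto_G (2-R) h2R).congr
    intro M
    rw [alt_genBinom]
    have h1 : 1-(2-R) = R-1 := by ring
    have h2 : ∀ i ∈ Finset.range M, (2-R)+(i:ℝ) = (i:ℝ)-(R-2) := fun i _ => by ring
    rw [h1, Finset.prod_congr rfl h2]
  -- shifted A
  have tA' : Filter.Tendsto (fun N : ℕ => ((N:ℝ)+1)^R * ((-1:ℝ)^(N+1) * genBinom (R-1) (N+1)))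
      Filter.atTop (nhds (1 / Real.Gamma (1-R))) := by
    have := tA.comp (tendsto_add_atTop_nat 1)
    apply this.congr
    intro N
    simp only [Function.comp_apply]
    push_cast
    ring
  -- shifted B : (N+1)^(R-1) with genBinom at N
  have tratio : Filter.Tendsto (fun N : ℕ => (((N:ℝ)+1)/N)^(R-1)) Filter.atTop (nhds 1) := by
    have hbase : Filter.Tendsto (fun N : ℕ => ((N:ℝ)+1)/N) Filter.atTop (nhds 1) := by
      have h0 : Filter.Tendsto (fun N : ℕ => 1 + 1/(N:ℝ)) Filter.atTop (nhds 1) := by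
        have : Filter.Tendsto (fun n : ℕ => 1 / (n:ℝ)) Filter.atTop (nhds 0) := tendsto_one_div_atTop_nhds_zero_nat
        simpa using (tendsto_const_nhds (x := (1:ℝ))).add this
      apply h0.congr'
      filter_upwards [Filter.eventually_gt_atTop 0] with N hN
      have hN0 : (0:ℝ) < N := by exact_mod_cast hN
      field_simp
    have := hbase.rpow_const (p := R-1) (Or.inl one_ne_zero)
    simpa using this
  have tB : Filter.Tendsto (fun N : ℕ => ((N:ℝ)+1)^(R-1) * ((-1:ℝ)^N * genBinom (R-2) N))
      Filter.atTop (nhds (1 / Real.Gamma (2-R))) := by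
    have := tratio.mul tB0
    rw [one_mul] at this
    apply this.congr'
    filter_upwards [Filter.eventually_gt_atTop 0] with N hN
    have hN0 : (0:ℝ) < N := by exact_mod_cast hN
    have hN1 : (0:ℝ) < (N:ℝ)+1 := by positivity
    have : (((N:ℝ)+1)/N)^(R-1) * (N:ℝ)^(R-1) = ((N:ℝ)+1)^(R-1) := by
      rw [← Real.mul_rpow (by positivity) hN0.le, div_mul_cancel₀ _ hN0.ne']
    rw [← this]; ring
  -- combined limit
  have tsum : Filter.Tendsto
      (fun N : ℕ => (q*x)^(-R) * x * (((N:ℝ)+1)^R * ((-1:ℝ)^(N+1) * genBinom (R-1) (N+1)))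
        + (q*x)^(1-R) * R * (((N:ℝ)+1)^(R-1) * ((-1:ℝ)^N * genBinom (R-2) N)))
      Filter.atTop
      (nhds ((q*x)^(-R) * x * (1/Real.Gamma (1-R)) + (q*x)^(1-R) * R * (1/Real.Gamma (2-R)))) :=
    ((tA'.const_mul _).add (tB.const_mul _))
  -- identify the constant
  have hconst : Real.sin (Real.pi * R) / Real.pi * Real.Gamma R * q ^ (-R) * x ^ (1 - R)
        * (1 - R * q / (R - 1))
      = (q*x)^(-R) * x * (1/Real.Gamma (1-R)) + (q*x)^(1-R) * R * (1/Real.Gamma (2-R)) := by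
    have hs : (0:ℝ) < Real.sin (Real.pi * R) := by
      apply Real.sin_pos_of_pos_of_lt_pi
      · positivity
      · nlinarith [Real.pi_pos]
    have hrefl := Real.Gamma_mul_Gamma_one_sub R
    have e1 : Real.sin (Real.pi * R) * (Real.Gamma R * Real.Gamma (1-R)) = Real.pi := by
      rw [hrefl, mul_comm, div_mul_cancel₀ _ hs.ne']
    have e2 : Real.sin (Real.pi * R) / Real.pi * Real.Gamma R = 1 / Real.Gamma (1-R) := by
      field_simp
      linear_combination e1
    have hΓ2 : Real.Gamma (2-R) = (1-R) * Real.Gamma (1-R) := by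
      rw [show (2:ℝ)-R = (1-R)+1 by ring, Real.Gamma_add_one h1R.ne']
    have hq1 : q^(1-R) = q * q^(-R) := by
      rw [show (1:ℝ)-R = 1 + (-R) by ring, Real.rpow_add hq, Real.rpow_one]
    have hx1 : x^(1-R) = x * x^(-R) := by
      rw [show (1:ℝ)-R = 1 + (-R) by ring, Real.rpow_add hx, Real.rpow_one]
    rw [e2, hΓ2, Real.mul_rpow hq.le hx.le, Real.mul_rpow hq.le hx.le, hq1, hx1]
    have hR1' : R - 1 ≠ 0 := by linarith
    have h1R' : (1:ℝ) - R ≠ 0 := h1R.ne'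
    field_simp
    ring
  rw [hconst]
  rw [← Filter.tendsto_add_atTop_iff_nat 1]
  apply tsum.congr
  intro N
  have hn : (0:ℝ) < (N:ℝ)+1 := by positivity
  have hcast : ((N+1 : ℕ) : ℝ) = (N:ℝ)+1 := by push_cast; ring
  rw [show N+1+1 = N+2 from rfl, sum_main R (q*x/((N+1:ℕ):ℝ)) x N, hcast]
  have h1 : (q*x/((N:ℝ)+1))^(-R) = (q*x)^(-R) * ((N:ℝ)+1)^R := by
    rw [Real.div_rpow hqx.le hn.le, Real.rpow_neg hn.le, div_eq_mul_inv, inv_inv]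
  have h2 : ((N:ℝ)+1)^R / ((N:ℝ)+1) = ((N:ℝ)+1)^(R-1) := by
    rw [Real.rpow_sub hn, Real.rpow_one]
  have h3 : (q*x)^(-R) * (q*x) = (q*x)^(1-R) := by
    rw [show (1:ℝ)-R = -R + 1 by ring, Real.rpow_add hqx, Real.rpow_one]
  rw [← h2, ← h3, h1]
  ring
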